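/- There exists a function assigning to each fingerprint f ∈ F a sequence α_1, …, α_{|f|} of pairwise distinct letters with {α_1,…,α_{|f|}} = f, such that for every 1 ≤ k ≤ |f| the prefix set {α_1,…,α_k} is itself a fingerprint in F. (This is the property that allows the set of fingerprints to be represented as a trie in which each node's fingerprint extends its parent's fingerprint by one letter.) -/

import Mathlib

/-- The fingerprint `C_s(i,j)`: the set of distinct letters occurring in `s_i … s_j`. -/
def fingerprint {α : Type*} [DecidableEq α] (s : ℕ → α) (i j : ℕ) : Finset α :=
  (Finset.Icc i j).image s

/-- `⟨i,j⟩` is a maximal location of the sequence `s_1 … s_n`. -/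
def IsMaxLoc {α : Type*} [DecidableEq α] (s : ℕ → α) (n i j : ℕ) : Prop :=
  1 ≤ i ∧ i ≤ j ∧ j ≤ n ∧
    (1 < i → s (i - 1) ∉ fingerprint s i j) ∧
    (j < n → s (j + 1) ∉ fingerprint s i j)

/-- The set `F` of all fingerprints of substrings of `s_1 … s_n`. -/
def Fings {α : Type*} [DecidableEq α] (s : ℕ → α) (n : ℕ) : Set (Finset α) :=
  {f | ∃ i j, 1 ≤ i ∧ i ≤ j ∧ j ≤ n ∧ fingerprint s i j = f}


/-- Ordering of letters of `fingerprint s i (i+d)` by first occurrence. -/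
def ordAux {α : Type*} [DecidableEq α] (s : ℕ → α) (i : ℕ) : ℕ → List α
  | 0 => [s i]
  | d + 1 =>
      ordAux s i d ++ if s (i + d + 1) ∈ (ordAux s i d).toFinset then [] else [s (i + d + 1)]

lemma fingerprint_succ {α : Type*} [DecidableEq α] (s : ℕ → α) (i d : ℕ) :
    fingerprint s i (i + d + 1) = insert (s (i + d + 1)) (fingerprint s i (i + d)) := by
  ext a
  simp only [fingerprint, Finset.mem_image, Finset.mem_Icc, Finset.mem_insert]
  constructor
  · rintro ⟨x, ⟨h1, h2⟩, rfl⟩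
    by_cases hx : x = i + d + 1
    · subst hx; exact Or.inl rfl
    · exact Or.inr ⟨x, ⟨h1, by omega⟩, rfl⟩
  · rintro (rfl | ⟨x, ⟨h1, h2⟩, rfl⟩)
    · exact ⟨i + d + 1, ⟨by omega, le_refl _⟩, rfl⟩
    · exact ⟨x, ⟨h1, by omega⟩, rfl⟩

lemma ordAux_succ {α : Type*} [DecidableEq α] (s : ℕ → α) (i d : ℕ) :
    ordAux s i (d + 1) =
      ordAux s i d ++ if s (i + d + 1) ∈ (ordAux s i d).toFinset then [] else [s (i + d + 1)] :=
  rfl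

lemma ordAux_toFinset {α : Type*} [DecidableEq α] (s : ℕ → α) (i d : ℕ) :
    (ordAux s i d).toFinset = fingerprint s i (i + d) := by
  induction d with
  | zero =>
      simp [ordAux, fingerprint]
  | succ d ih =>
      rw [show i + (d + 1) = i + d + 1 from rfl, fingerprint_succ]
      by_cases h : s (i + d + 1) ∈ (ordAux s i d).toFinset
      · rw [ordAux_succ, if_pos h, List.append_nil, ih]
        rw [ih] at h
        exact (Finset.insert_eq_self.mpr h).symm
      · rw [ordAux_succ, if_neg h, List.toFinset_append, ih]
        ext a; simp [or_comm]

lemma ordAux_nodup {α : Type*} [DecidableEq α] (s : ℕ → α) (i d : ℕ) :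
    (ordAux s i d).Nodup := by
  induction d with
  | zero => simp [ordAux]
  | succ d ih =>
      by_cases h : s (i + d + 1) ∈ (ordAux s i d).toFinset
      · rw [ordAux_succ, if_pos h, List.append_nil]; exact ih
      · rw [List.mem_toFinset] at h
        rw [ordAux_succ, if_neg (by simpa using h), List.nodup_append]
        exact ⟨ih, List.nodup_singleton _, fun a ha b hb => by
          simp at hb; subst hb; rintro rfl; exact h ha⟩

lemma ordAux_take {α : Type*} [DecidableEq α] (s : ℕ → α) (i d : ℕ) :
    ∀ k, 1 ≤ k → k ≤ (ordAux s i d).length →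
      ∃ d' ≤ d, ((ordAux s i d).take k).toFinset = fingerprint s i (i + d') := by
  induction d with
  | zero =>
      intro k hk1 hk2
      simp [ordAux] at hk2
      refine ⟨0, le_refl 0, ?_⟩
      have : k = 1 := by omega
      subst this
      simp [ordAux, fingerprint]
  | succ d ih =>
      intro k hk1 hk2
      by_cases h : k ≤ (ordAux s i d).length
      · obtain ⟨d', hd', heq⟩ := ih k hk1 h
        refine ⟨d', by omega, ?_⟩
        rw [← heq, ordAux_succ, List.take_append_of_le_length h]
      · refine ⟨d + 1, le_refl _, ?_⟩
        have hlen : k = (ordAux s i (d+1)).length := by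
          have : (ordAux s i (d+1)).length ≤ (ordAux s i d).length + 1 := by
            by_cases h2 : s (i + d + 1) ∈ (ordAux s i d).toFinset <;>
              simp [ordAux_succ, h2]
          omega
        rw [hlen, List.take_length]
        exact ordAux_toFinset s i (d + 1)

/-- There is a function assigning to each fingerprint `f ∈ F` an ordering
`α_1, …, α_{|f|}` of its letters (a duplicate-free list whose set of letters is `f`)
such that every nonempty prefix set `{α_1, …, α_k}` is itself a fingerprint in `F`.
This is the property underlying the trie representation of `F`. -/
theorem exists_trie_ordering {α : Type*} [DecidableEq α] (s : ℕ → α) (n : ℕ) :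
    ∃ ord : Finset α → List α,
      ∀ f ∈ Fings s n,
        (ord f).Nodup ∧ (ord f).toFinset = f ∧
          ∀ k, 1 ≤ k → k ≤ f.card → ((ord f).take k).toFinset ∈ Fings s n := by
  classical
  refine ⟨fun f => if h : f ∈ Fings s n then
      ordAux s h.choose ((h.choose_spec).choose - h.choose) else [], ?_⟩
  intro f hf
  simp only [dif_pos hf]
  set i := hf.choose with hi
  obtain ⟨hij1, hij2, hij3, hij4⟩ := hf.choose_spec.choose_spec
  set j := hf.choose_spec.choose with hj
  have hji : i + (j - i) = j := by omega
  constructor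
  · exact ordAux_nodup s i (j - i)
  constructor
  · rw [ordAux_toFinset, hji, hij4]
  · intro k hk1 hk2
    have hcard : f.card = (ordAux s i (j - i)).length := by
      have h1 := ordAux_toFinset s i (j - i)
      rw [hji] at h1
      rw [← hij4, ← h1]
      exact List.toFinset_card_of_nodup (ordAux_nodup s i (j - i))
    obtain ⟨d', hd', heq⟩ := ordAux_take s i (j - i) k hk1 (by omega)
    rw [heq]
    exact ⟨i, i + d', hij1, by omega, by omega, rfl⟩
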